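/- Let L be a number field, let k ≥ 2 be an integer, and let f ∈ L[u] be a nonzero polynomial. Suppose f has a root α in an algebraic closure of L whose multiplicity m (the root multiplicity of α in f) is not divisible by k. Then the set of classes in Lˣ/(Lˣ)^k of the values f(u), as u ranges over those elements of L with f(u) ≠ 0, is infinite. -/

import Mathlib

open Polynomial NumberField IsDedekindDomain IsDedekindDomain.HeightOneSpectrum Filter

noncomputable section Stmt3Aux

namespace Stmt3Aux

/-- `ofAdd (-1) < 1` in `ℤₘ₀`. -/
theorem ofAdd_neg_one_lt_one :
    ((Multiplicative.ofAdd (-1 : ℤ) : Multiplicative ℤ) : WithZero (Multiplicative ℤ)) < 1 := by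
  rw [← WithZero.coe_one, WithZero.coe_lt_coe, ← ofAdd_zero]
  exact Multiplicative.ofAdd_lt.2 (by norm_num)

/-- In `ℤₘ₀`, anything `< 1` and `≠ ofAdd (-1)` is `< ofAdd (-1)`. -/
theorem lt_ofAdd_neg_one {x : WithZero (Multiplicative ℤ)} (h1 : x < 1)
    (h2 : x ≠ ((Multiplicative.ofAdd (-1 : ℤ) : Multiplicative ℤ) :
      WithZero (Multiplicative ℤ))) :
    x < ((Multiplicative.ofAdd (-1 : ℤ) : Multiplicative ℤ) : WithZero (Multiplicative ℤ)) := by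
  rcases eq_or_ne x 0 with rfl | hx0
  · exact WithZero.zero_lt_coe _
  · set γ := WithZero.unzero hx0 with hγ
    have hxγ : (γ : WithZero (Multiplicative ℤ)) = x := WithZero.coe_unzero hx0
    rw [← hxγ] at h1 h2 ⊢
    rw [← WithZero.coe_one, WithZero.coe_lt_coe] at h1
    rw [WithZero.coe_lt_coe]
    rw [Ne, WithZero.coe_inj] at h2
    have he1 : Multiplicative.toAdd γ < 0 := by
      have := Multiplicative.toAdd_lt.2 h1
      simpa using this
    have he2 : Multiplicative.toAdd γ ≠ -1 := fun h => h2 (by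
      rw [← ofAdd_toAdd γ, h])
    have : Multiplicative.toAdd γ < -1 := by omega
    rw [← ofAdd_toAdd γ]
    exact Multiplicative.ofAdd_lt.2 this

variable {L : Type*} [Field L] [NumberField L]

/-- For a nonzero element of a number field, only finitely many finite places have
valuation different from 1. -/
theorem finite_val_ne_one (x : L) (hx : x ≠ 0) :
    {v : HeightOneSpectrum (𝓞 L) | v.valuation L x ≠ 1}.Finite := by
  obtain ⟨⟨n, d⟩, hnd⟩ := IsLocalization.surj (nonZeroDivisors (𝓞 L)) x
  have hd0 : (d : 𝓞 L) ≠ 0 := nonZeroDivisors.coe_ne_zero d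
  have hn0 : n ≠ 0 := by
    intro h
    rw [h, map_zero] at hnd
    refine (mul_ne_zero hx ?_) hnd
    intro hd
    exact hd0 ((injective_iff_map_eq_zero _).1 (IsFractionRing.injective (𝓞 L) L) _ hd)
  have hfin1 : {v : HeightOneSpectrum (𝓞 L) | v.asIdeal ∣ Ideal.span {n}}.Finite :=
    Ideal.finite_factors (by simpa using hn0)
  have hfin2 : {v : HeightOneSpectrum (𝓞 L) | v.asIdeal ∣ Ideal.span {(d : 𝓞 L)}}.Finite :=
    Ideal.finite_factors (by simpa using hd0)
  refine (hfin1.union hfin2).subset ?_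
  intro v hv
  by_contra hcon
  simp only [Set.mem_union, Set.mem_setOf_eq, not_or] at hcon
  obtain ⟨h1, h2⟩ := hcon
  have hvn : v.intValuation n = 1 :=
    le_antisymm (v.intValuation_le_one n)
      (not_lt.1 (fun h => h1 ((v.intValuation_lt_one_iff_dvd n).1 h)))
  have hvd : v.intValuation (d : 𝓞 L) = 1 :=
    le_antisymm (v.intValuation_le_one _)
      (not_lt.1 (fun h => h2 ((v.intValuation_lt_one_iff_dvd _).1 h)))
  apply hv
  have := congrArg (v.valuation (K := L)) hnd
  rw [map_mul, valuation_of_algebraMap, valuation_of_algebraMap, hvn, hvd, mul_one] at this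
  exact this

/-- Valuation of a polynomial value is ≤ 1 if all coefficients and the point have
valuation ≤ 1. -/
theorem val_eval_le_one (v : HeightOneSpectrum (𝓞 L)) (p : L[X])
    (hp : ∀ i, v.valuation L (p.coeff i) ≤ 1) {x : L} (hx : v.valuation L x ≤ 1) :
    v.valuation L (p.eval x) ≤ 1 := by
  rw [eval_eq_sum_range]
  refine Valuation.map_sum_le _ (fun i _ => ?_)
  rw [map_mul, map_pow]
  exact mul_le_one' (hp i) (pow_le_one' hx i)

/-- Only finitely many places see any coefficient of `p` with valuation > 1. -/
theorem finite_coeff_bad (p : L[X]) :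
    {v : HeightOneSpectrum (𝓞 L) | ¬ ∀ i, v.valuation L (p.coeff i) ≤ 1}.Finite := by
  have hsub : {v : HeightOneSpectrum (𝓞 L) | ¬ ∀ i, v.valuation L (p.coeff i) ≤ 1} ⊆
      ⋃ i ∈ Finset.range (p.natDegree + 1),
        {v : HeightOneSpectrum (𝓞 L) | p.coeff i ≠ 0 ∧ v.valuation L (p.coeff i) ≠ 1} := by
    intro v hv
    simp only [Set.mem_setOf_eq, not_forall] at hv
    obtain ⟨i, hi⟩ := hv
    have hc0 : p.coeff i ≠ 0 := by
      intro h; rw [h, map_zero] at hi; exact hi zero_le_one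
    have hile : i ≤ p.natDegree := by
      by_contra hgt
      exact hc0 (p.coeff_eq_zero_of_natDegree_lt (not_le.1 hgt))
    exact Set.mem_biUnion (Finset.mem_range.mpr (Nat.lt_succ_of_le hile))
      ⟨hc0, fun h => hi (le_of_eq h)⟩
  refine Set.Finite.subset ?_ hsub
  refine Set.Finite.biUnion (Finset.range (p.natDegree + 1)).finite_toSet (fun i _ => ?_)
  by_cases hc : p.coeff i = 0
  · simp [hc]
  · exact ((finite_val_ne_one (p.coeff i) hc).subset (fun v hv => hv.2))

/-- Taylor expansion to second order with polynomial remainder. -/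
theorem exists_taylor (p : L[X]) (u t : L) :
    ∃ Q : L[X], p.eval (u + t) = p.eval u + p.derivative.eval u * t + t ^ 2 * Q.eval t ∧
      ∀ i, Q.coeff i = (hasseDeriv (i + 2) p).eval u := by
  classical
  set q := taylor u p with hq
  have hdvd : X ^ 2 ∣ q - C (q.coeff 0) - C (q.coeff 1) * X := by
    rw [X_pow_dvd_iff]
    intro d hd
    interval_cases d <;> simp [coeff_C]
  obtain ⟨Q, hQ⟩ := hdvd
  have hcoeff : ∀ i, Q.coeff i = (hasseDeriv (i + 2) p).eval u := by
    intro i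
    have := congrArg (fun r => Polynomial.coeff r (i + 2)) hQ
    simp only [coeff_sub, coeff_C, coeff_C_mul, coeff_X, coeff_X_pow_mul] at this
    rw [← taylor_coeff (i + 2) (r := u) (f := p)]
    simpa [hq] using this.symm
  refine ⟨Q, ?_, hcoeff⟩
  have hqq : q = C (q.coeff 0) + C (q.coeff 1) * X + X ^ 2 * Q := by
    rw [← hQ]; ring
  have heval : p.eval (u + t) = q.eval t := by
    rw [hq, taylor_eval, add_comm t u]
  rw [heval, hqq]
  simp only [eval_add, eval_mul, eval_C, eval_X, eval_pow]
  rw [taylor_coeff_zero, taylor_coeff_one]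

/-- Bezout-style argument: if `a*b + c*d = 1` with everything `v`-integral, `v b < 1`,
then `v d = 1`. -/
theorem val_eq_one_of_sum (v : HeightOneSpectrum (𝓞 L)) {a b c d : L}
    (h : a * b + c * d = 1) (ha : v.valuation L a ≤ 1) (hb : v.valuation L b < 1)
    (hc : v.valuation L c ≤ 1) (hd : v.valuation L d ≤ 1) : v.valuation L d = 1 := by
  have h1 : v.valuation L (a * b) < 1 := by
    rw [map_mul]
    calc v.valuation L a * v.valuation L b ≤ 1 * v.valuation L b := mul_le_mul_left ha _
    _ = v.valuation L b := one_mul _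
    _ < 1 := hb
  have h2 : v.valuation L (c * d) = 1 := by
    by_contra hne
    rcases lt_or_gt_of_ne hne with hlt | hgt
    · have hle : v.valuation L (a * b + c * d) < 1 :=
        lt_of_le_of_lt ((v.valuation L).map_add _ _) (max_lt h1 hlt)
      rw [h, map_one] at hle
      exact lt_irrefl _ hle
    · have heq : v.valuation L (a * b + c * d) = v.valuation L (c * d) :=
        Valuation.map_add_eq_of_lt_right _ (lt_trans h1 hgt)
      rw [h, map_one] at heq
      exact lt_irrefl _ (heq ▸ hgt)
  rw [map_mul] at h2
  refine le_antisymm hd ?_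
  calc (1 : WithZero (Multiplicative ℤ)) = v.valuation L c * v.valuation L d := h2.symm
  _ ≤ 1 * v.valuation L d := mul_le_mul_left hc _
  _ = v.valuation L d := one_mul _

/-- Euclid-style lemma: a nonconstant polynomial over the ring of integers has a root
mod `v` for some finite place `v` avoiding any given finite set. -/
theorem exists_place_root (G : (𝓞 L)[X])
    (hdeg : 0 < (G.map (algebraMap (𝓞 L) L)).degree)
    (T : Set (HeightOneSpectrum (𝓞 L))) (hT : T.Finite) :
    ∃ v, v ∉ T ∧ ∃ w : 𝓞 L, G.eval w ∈ v.asIdeal := by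
  classical
  set Gm := G.map (algebraMap (𝓞 L) L) with hGm
  have hGm0 : Gm ≠ 0 := fun e => by rw [e] at hdeg; simp at hdeg
  -- choose s with G.eval s ≠ 0
  obtain ⟨s, hs⟩ : ∃ s : 𝓞 L, G.eval s ≠ 0 := by
    have hroots : {x : L | Gm.IsRoot x}.Finite := finite_setOf_isRoot hGm0
    have hfin : {s : 𝓞 L | G.eval s = 0}.Finite := by
      refine Set.Finite.of_finite_image (f := algebraMap (𝓞 L) L) (hroots.subset ?_)
        ((RingOfIntegers.coe_injective (K := L)).injOn)
      rintro x ⟨s, hs, rfl⟩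
      simp only [Set.mem_setOf_eq, IsRoot.def]
      rw [hGm, eval_map, eval₂_hom, hs, map_zero]
    obtain ⟨s, hsmem⟩ := (hfin.infinite_compl).nonempty
    exact ⟨s, hsmem⟩
  set c := G.eval s with hc
  -- the auxiliary element z
  have hzex : ∀ v : HeightOneSpectrum (𝓞 L),
      ∃ x : 𝓞 L, (v ∈ hT.toFinset → x ∈ v.asIdeal) ∧ x ≠ 0 := by
    intro v
    by_cases hv : v ∈ hT.toFinset
    · obtain ⟨x, hx, hx0⟩ := Submodule.exists_mem_ne_zero_of_ne_bot v.ne_bot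
      exact ⟨x, fun _ => hx, hx0⟩
    · exact ⟨1, fun h => absurd h hv, one_ne_zero⟩
  choose zf hzf hzf0 using hzex
  set z := ∏ v ∈ hT.toFinset, zf v with hz
  have hz0 : z ≠ 0 := Finset.prod_ne_zero_iff.2 (fun v _ => hzf0 v)
  have hzmem : ∀ v ∈ hT.toFinset, z ∈ v.asIdeal := by
    intro v hv
    obtain ⟨r, hr⟩ := Finset.dvd_prod_of_mem zf hv
    rw [hz, hr]
    exact Ideal.mul_mem_right _ _ (hzf v hv)
  set bb := c ^ 2 * z with hbb
  have hbb0 : bb ≠ 0 := mul_ne_zero (pow_ne_zero _ hs) hz0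
  -- the shifted polynomial over L
  set ι := algebraMap (𝓞 L) L with hι
  have hιinj : Function.Injective ι := RingOfIntegers.coe_injective
  set P : L[X] := Gm.comp (C (ι s) + C (ι bb) * X) with hP
  have hιbb : ι bb ≠ 0 := fun h => hbb0 (hιinj (by rwa [map_zero]))
  have hlin : (C (ι s) + C (ι bb) * X).natDegree = 1 := by
    rw [add_comm]
    compute_degree!
  have hPnat : 0 < P.natDegree := by
    rw [hP, natDegree_comp, hlin, mul_one]
    exact natDegree_pos_iff_degree_pos.2 hdeg
  have hPdeg : 0 < P.degree := natDegree_pos_iff_degree_pos.1 hPnat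
  have hP0 : P ≠ 0 := fun e => by rw [e] at hPnat; simp at hPnat
  have hPn : ∀ n : ℕ, P.eval (n : L) = ι (G.eval (s + n * bb)) := by
    intro n
    rw [hP, eval_comp]
    simp only [eval_add, eval_mul, eval_C, eval_X]
    rw [hGm, eval_map]
    have heq : ι s + ι bb * (n : L) = ι (s + n * bb) := by
      simp only [map_add, map_mul, map_natCast]
      ring
    rw [heq, eval₂_hom]
  -- norm growth
  have hσ : ∀ σ : L →ₐ[ℚ] ℂ, Tendsto (fun n : ℕ => ‖σ (P.eval (n : L))‖)
      atTop atTop := by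
    intro σ
    have hlc : (σ : L →+* ℂ) P.leadingCoeff ≠ 0 := by
      simpa using leadingCoeff_ne_zero.2 hP0
    have hzt : Tendsto (norm ∘ fun n : ℕ => ((n : ℂ))) atTop atTop := by
      simp only [Function.comp_def, Complex.norm_natCast]
      exact tendsto_natCast_atTop_atTop
    have h1 := Polynomial.tendsto_abv_eval₂_atTop (σ : L →+* ℂ) (norm : ℂ → ℝ) P hPdeg hlc hzt
    refine h1.congr (fun n => ?_)
    have hcast : ((n : ℂ)) = (σ : L →+* ℂ) ((n : L)) := by simp
    rw [hcast, eval₂_hom]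
    rfl
  set Brat : ℚ := |Algebra.norm ℚ (ι c)| with hBrat
  have hBnonneg : (0:ℚ) ≤ Brat := abs_nonneg _
  have hev : ∀ᶠ n : ℕ in atTop, ∀ σ : L →ₐ[ℚ] ℂ,
      (Brat : ℝ) + 1 ≤ ‖σ (P.eval (n : L))‖ :=
    eventually_all.2 fun σ => (hσ σ).eventually_ge_atTop _
  obtain ⟨n, hn⟩ := hev.exists
  have habs : ∀ x : L, ((|Algebra.norm ℚ x| : ℚ) : ℝ) =
      ∏ σ : L →ₐ[ℚ] ℂ, ‖σ x‖ := by
    intro x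
    have h1 := Algebra.norm_eq_prod_embeddings ℚ ℂ x
    have h2 := congrArg (norm : ℂ → ℝ) h1
    rw [Complex.norm_prod] at h2
    rw [← h2]
    have hcast : (algebraMap ℚ ℂ) (Algebra.norm ℚ x) =
        (((Algebra.norm ℚ x : ℚ) : ℝ) : ℂ) := by
      push_cast
      norm_cast
    rw [hcast, Complex.norm_real, Real.norm_eq_abs, Rat.cast_abs]
  have hkey : Brat < |Algebra.norm ℚ (P.eval (n : L))| := by
    rw [← Rat.cast_lt (K := ℝ)]
    conv_rhs => rw [habs]
    have hne : Nonempty (L →ₐ[ℚ] ℂ) := ⟨IsAlgClosed.lift⟩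
    obtain ⟨σ₀⟩ := hne
    have hge1 : ∀ σ : L →ₐ[ℚ] ℂ, (1:ℝ) ≤ ‖σ (P.eval (n : L))‖ := by
      intro σ
      have := hn σ
      have hB : (0:ℝ) ≤ (Brat : ℝ) := by exact_mod_cast hBnonneg
      linarith
    have hF0 : (0:ℝ) ≤ ‖σ₀ (P.eval (n : L))‖ := norm_nonneg _
    have hrest : (1:ℝ) ≤ ∏ σ ∈ Finset.univ.erase σ₀, ‖σ (P.eval (n : L))‖ := by
      have h := Finset.prod_le_prod (s := Finset.univ.erase σ₀)
        (f := fun _ : (L →ₐ[ℚ] ℂ) => (1:ℝ))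
        (g := fun σ : (L →ₐ[ℚ] ℂ) => ‖σ (P.eval (n : L))‖)
        (fun _ _ => zero_le_one) (fun σ _ => hge1 σ)
      simpa using h
    calc (Brat : ℝ) < (Brat : ℝ) + 1 := by linarith
    _ ≤ ‖σ₀ (P.eval (n : L))‖ := hn σ₀
    _ = ‖σ₀ (P.eval (n : L))‖ * 1 := by ring
    _ ≤ ‖σ₀ (P.eval (n : L))‖ *
        ∏ σ ∈ Finset.univ.erase σ₀, ‖σ (P.eval (n : L))‖ :=
        mul_le_mul_of_nonneg_left hrest hF0
    _ = ∏ σ : L →ₐ[ℚ] ℂ, ‖σ (P.eval (n : L))‖ :=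
        Finset.mul_prod_erase Finset.univ
          (fun σ : L →ₐ[ℚ] ℂ => ‖σ (P.eval (n : L))‖) (Finset.mem_univ σ₀)
  -- factorization G.eval t = c * w
  set t := s + (n : 𝓞 L) * bb with ht
  obtain ⟨r, hr⟩ := sub_dvd_eval_sub t s G
  have hts : t - s = (n : 𝓞 L) * (c ^ 2 * z) := by rw [ht, hbb]; ring
  set w := 1 + (n : 𝓞 L) * (c * (z * r)) with hw
  have hcw : G.eval t = c * w := by
    have hGt : G.eval t = c + (t - s) * r := by
      have := hr
      rw [hc]
      linear_combination this
    rw [hGt, hts, hw]; ring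
  have hnormP : Brat < |Algebra.norm ℚ (ι (G.eval t))| := by
    have := hkey
    rwa [hPn n] at this
  have hGt0 : G.eval t ≠ 0 := by
    intro h0
    rw [h0, map_zero, Algebra.norm_zero, abs_zero] at hnormP
    exact absurd hnormP (not_lt.2 hBnonneg)
  have hw0 : w ≠ 0 := fun h0 => hGt0 (by rw [hcw, h0, mul_zero])
  have hBpos : 0 < Brat := by
    rw [hBrat]
    refine abs_pos.2 ?_
    rw [Algebra.norm_ne_zero_iff]
    exact fun h => hs (hιinj (by rwa [map_zero]))
  have hwnorm : 1 < |Algebra.norm ℚ (ι w)| := by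
    have hmul : |Algebra.norm ℚ (ι (G.eval t))| = Brat * |Algebra.norm ℚ (ι w)| := by
      rw [hcw, map_mul, map_mul, abs_mul, hBrat]
    rw [hmul] at hnormP
    by_contra hle
    push_neg at hle
    nlinarith
  have hwnotunit : ¬ IsUnit w := by
    intro hu
    rw [NumberField.isUnit_iff_norm] at hu
    rw [RingOfIntegers.coe_norm] at hu
    rw [hu] at hwnorm
    exact lt_irrefl _ hwnorm
  obtain ⟨p, hpmax, hple⟩ := Ideal.exists_le_maximal (Ideal.span {w})
    (by rwa [Ne, Ideal.span_singleton_eq_top])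
  have hwp : w ∈ p := hple (Ideal.mem_span_singleton_self w)
  have hpbot : p ≠ ⊥ := by
    intro h
    rw [h] at hwp
    exact hw0 (Ideal.mem_bot.1 hwp)
  refine ⟨⟨p, hpmax.isPrime, hpbot⟩, ?_, t, ?_⟩
  · intro hvT
    have hzp : z ∈ p := hzmem _ (hT.mem_toFinset.2 hvT)
    have h1 : (1 : 𝓞 L) ∈ p := by
      have heq : (1 : 𝓞 L) = w - (n : 𝓞 L) * (c * (z * r)) := by rw [hw]; ring
      rw [heq]
      refine Ideal.sub_mem _ hwp ?_
      exact Ideal.mul_mem_left _ _ (Ideal.mul_mem_left _ _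
        (Ideal.mul_mem_right _ _ hzp))
    exact hpmax.ne_top ((Ideal.eq_top_iff_one _).2 h1)
  · rw [hcw]
    exact Ideal.mul_mem_left _ _ hwp

end Stmt3Aux

end Stmt3Aux

/-- Value-distribution lemma: if `f ∈ L[u]` has a root in an algebraic closure
of `L` whose multiplicity is not divisible by `k`, then the values `f(u)` for
`u ∈ L`, `f(u) ≠ 0`, hit infinitely many classes in `Lˣ/(Lˣ)ᵏ`. -/
theorem stmt_3 (L : Type*) [Field L] [NumberField L] (k : ℕ) (hk : 2 ≤ k)
    (f : Polynomial L) (hf : f ≠ 0) (α : AlgebraicClosure L)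
    (hroot : Polynomial.aeval α f = 0)
    (hmult : ¬ k ∣ Polynomial.rootMultiplicity α
      (f.map (algebraMap L (AlgebraicClosure L)))) :
    {q : Lˣ ⧸ (powMonoidHom k : Lˣ →* Lˣ).range |
      ∃ (u : L) (h : Polynomial.eval u f ≠ 0),
        (QuotientGroup.mk (Units.mk0 (Polynomial.eval u f) h) :
          Lˣ ⧸ (powMonoidHom k : Lˣ →* Lˣ).range) = q}.Infinite := by
  classical
  open Stmt3Aux in
  by_contra hinf
  rw [Set.not_infinite] at hinf
  -- minimal polynomial data
  have halg : IsIntegral L α := Algebra.IsIntegral.isIntegral α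
  set g := minpoly L α with hgdef
  have hirr : Irreducible g := minpoly.irreducible halg
  have hg0 : g ≠ 0 := hirr.ne_zero
  have hprime : Prime g := hirr.prime
  obtain ⟨h, hfeq, hgh⟩ :=
    (FiniteMultiplicity.of_prime_left hprime hf).exists_eq_pow_mul_and_not_dvd
  set m := multiplicity g f with hm
  have hh0 : h ≠ 0 := by
    rintro rfl
    rw [mul_zero] at hfeq
    exact hf hfeq
  -- m equals the root multiplicity of α
  have hrm : Polynomial.rootMultiplicity α (f.map (algebraMap L (AlgebraicClosure L))) = m := by
    have hmapeq : f.map (algebraMap L (AlgebraicClosure L)) =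
        (g.map (algebraMap L (AlgebraicClosure L))) ^ m *
          h.map (algebraMap L (AlgebraicClosure L)) := by
      rw [hfeq, Polynomial.map_mul, Polynomial.map_pow]
    have hgm0 : g.map (algebraMap L (AlgebraicClosure L)) ≠ 0 := Polynomial.map_ne_zero hg0
    have hhm0 : h.map (algebraMap L (AlgebraicClosure L)) ≠ 0 := Polynomial.map_ne_zero hh0
    have hgroot : IsRoot (g.map (algebraMap L (AlgebraicClosure L))) α := by
      rw [IsRoot.def, eval_map, ← aeval_def]
      exact minpoly.aeval L α
    have hrg : rootMultiplicity α (g.map (algebraMap L (AlgebraicClosure L))) = 1 :=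
      le_antisymm (rootMultiplicity_le_one_of_separable hirr.separable.map α)
        ((rootMultiplicity_pos hgm0).2 hgroot)
    have hrh : rootMultiplicity α (h.map (algebraMap L (AlgebraicClosure L))) = 0 := by
      refine rootMultiplicity_eq_zero ?_
      intro hroot'
      apply hgh
      refine minpoly.dvd L α ?_
      rwa [IsRoot.def, eval_map, ← aeval_def] at hroot'
    have hpow : ∀ n : ℕ,
        rootMultiplicity α ((g.map (algebraMap L (AlgebraicClosure L))) ^ n) = n := by
      intro n
      induction n with
      | zero =>
        rw [pow_zero]
        exact rootMultiplicity_eq_zero (by simp [IsRoot.def])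
      | succ j ih =>
        rw [pow_succ, rootMultiplicity_mul (mul_ne_zero (pow_ne_zero _ hgm0) hgm0), ih, hrg]
    rw [hmapeq, rootMultiplicity_mul (mul_ne_zero (pow_ne_zero _ hgm0) hhm0), hpow, hrh,
      add_zero]
  have hkm : ¬ k ∣ m := by rwa [hrm] at hmult
  -- Bezout data
  obtain ⟨A₁, B₁, hbz1⟩ := hirr.separable
  obtain ⟨A₂, B₂, hbz2⟩ := (hprime.coprime_iff_not_dvd.2 hgh)
  -- integer normalization of g
  obtain ⟨b, hbmem, hb⟩ := IsLocalization.integerNormalization_spec (nonZeroDivisors (𝓞 L)) g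
  set G := IsLocalization.integerNormalization (nonZeroDivisors (𝓞 L)) g with hGdef
  have hbL0 : (algebraMap (𝓞 L) L) (b : 𝓞 L) ≠ 0 := by
    intro hcon
    exact nonZeroDivisors.ne_zero hbmem
      ((injective_iff_map_eq_zero _).1 (IsFractionRing.injective (𝓞 L) L) _ hcon)
  have hGmap : G.map (algebraMap (𝓞 L) L) = C ((algebraMap (𝓞 L) L) (b : 𝓞 L)) * g := by
    ext i
    rw [hb, coeff_smul, coeff_C_mul, Algebra.smul_def]
  have hdegG : 0 < (G.map (algebraMap (𝓞 L) L)).degree := by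
    rw [hGmap, degree_C_mul hbL0]
    exact minpoly.degree_pos halg
  -- the finite bad set of places
  set T : Set (HeightOneSpectrum (𝓞 L)) :=
    ({v | ¬ ∀ i, v.valuation L (g.coeff i) ≤ 1} ∪
     {v | ¬ ∀ i, v.valuation L (h.coeff i) ≤ 1} ∪
     {v | ¬ ∀ i, v.valuation L (A₁.coeff i) ≤ 1} ∪
     {v | ¬ ∀ i, v.valuation L (B₁.coeff i) ≤ 1} ∪
     {v | ¬ ∀ i, v.valuation L (A₂.coeff i) ≤ 1} ∪
     {v | ¬ ∀ i, v.valuation L (B₂.coeff i) ≤ 1} ∪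
     {v | v.valuation L ((algebraMap (𝓞 L) L) (b : 𝓞 L)) ≠ 1}) ∪
     (⋃ q ∈ hinf.toFinset, {v | v.valuation L (((q.out : Lˣ) : L)) ≠ 1}) with hT
  have hTfin : T.Finite := by
    refine Set.Finite.union ?_ ?_
    · refine (((((((finite_coeff_bad g).union (finite_coeff_bad h)).union
        (finite_coeff_bad A₁)).union (finite_coeff_bad B₁)).union
        (finite_coeff_bad A₂)).union (finite_coeff_bad B₂)).union
        (finite_val_ne_one _ hbL0))
    · refine Set.Finite.biUnion hinf.toFinset.finite_toSet (fun q _ => ?_)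
      exact finite_val_ne_one _ (Units.ne_zero _)
  -- get a good place with a root of G
  obtain ⟨v, hvT, w, hwv⟩ := Stmt3Aux.exists_place_root G hdegG T hTfin
  rw [hT] at hvT
  simp only [Set.mem_union, Set.mem_setOf_eq, Set.mem_iUnion, not_or, not_exists,
    not_not, exists_prop, not_forall] at hvT
  obtain ⟨⟨⟨⟨⟨⟨⟨hvg, hvh⟩, hvA₁⟩, hvB₁⟩, hvA₂⟩, hvB₂⟩, hvb⟩, hvrep⟩ := hvT
  -- derived coefficient bounds for the derivative
  have hvdg : ∀ i, v.valuation L ((derivative g).coeff i) ≤ 1 := by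
    intro i
    rw [coeff_derivative, map_mul]
    refine mul_le_one' (hvg _) ?_
    have hcast : ((i : L) + 1) = (algebraMap (𝓞 L) L) ((i : 𝓞 L) + 1) := by
      rw [map_add, map_natCast, map_one]
    rw [hcast]
    exact v.valuation_le_one _
  -- the base point u₀
  set u₀ := (algebraMap (𝓞 L) L) w with hu₀def
  have hu₀ : v.valuation L u₀ ≤ 1 := v.valuation_le_one w
  have hGw : v.valuation L ((algebraMap (𝓞 L) L) (G.eval w)) < 1 := by
    rw [valuation_of_algebraMap]
    exact (v.intValuation_lt_one_iff_dvd _).2 (Ideal.dvd_span_singleton.2 hwv)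
  have hgeval : (algebraMap (𝓞 L) L) (G.eval w) =
      (algebraMap (𝓞 L) L) (b : 𝓞 L) * g.eval u₀ := by
    have h1 : (G.map (algebraMap (𝓞 L) L)).eval u₀ = (algebraMap (𝓞 L) L) (G.eval w) := by
      rw [eval_map, hu₀def, eval₂_hom]
    rw [← h1, hGmap, eval_mul, eval_C]
  have hgu₀ : v.valuation L (g.eval u₀) < 1 := by
    rw [hgeval, map_mul, hvb, one_mul] at hGw
    exact hGw
  -- the uniformizer
  obtain ⟨π, hπ⟩ := v.intValuation_exists_uniformizer
  set tL := (algebraMap (𝓞 L) L) π with htL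
  have hπv : v.valuation L tL = ((Multiplicative.ofAdd (-1 : ℤ) : Multiplicative ℤ) :
      WithZero (Multiplicative ℤ)) := by
    rw [htL, valuation_of_algebraMap, hπ]; rfl
  have hπle : v.valuation L tL ≤ 1 := by
    rw [hπv]
    exact le_of_lt Stmt3Aux.ofAdd_neg_one_lt_one
  -- Taylor data
  obtain ⟨Q, hQev, hQco⟩ := Stmt3Aux.exists_taylor g u₀ tL
  have hQle : ∀ i, v.valuation L (Q.coeff i) ≤ 1 := by
    intro i
    rw [hQco i]
    refine Stmt3Aux.val_eval_le_one v _ (fun j => ?_) hu₀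
    rw [hasseDeriv_coeff, map_mul]
    refine mul_le_one' ?_ (hvg _)
    have hcast : (((j + (i + 2)).choose (i + 2) : ℕ) : L) =
        (algebraMap (𝓞 L) L) (((j + (i + 2)).choose (i + 2) : ℕ) : 𝓞 L) := by
      rw [map_natCast]
    rw [hcast]
    exact v.valuation_le_one _
  have hQevle : v.valuation L (Q.eval tL) ≤ 1 := Stmt3Aux.val_eval_le_one v Q hQle hπle
  -- the derivative has valuation 1 at u₀
  have hder : v.valuation L ((derivative g).eval u₀) = 1 := by
    have h1 : (A₁.eval u₀) * (g.eval u₀) + (B₁.eval u₀) * ((derivative g).eval u₀) = 1 := by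
      have := congrArg (Polynomial.eval u₀) hbz1
      simpa [eval_add, eval_mul] using this
    exact Stmt3Aux.val_eq_one_of_sum v h1
      (Stmt3Aux.val_eval_le_one v A₁ hvA₁ hu₀) hgu₀
      (Stmt3Aux.val_eval_le_one v B₁ hvB₁ hu₀)
      (Stmt3Aux.val_eval_le_one v (derivative g) hvdg hu₀)
  -- find a point where g has valuation exactly ofAdd (-1)
  have hmain : ∃ u : L, v.valuation L u ≤ 1 ∧ v.valuation L (g.eval u) =
      ((Multiplicative.ofAdd (-1 : ℤ) : Multiplicative ℤ) : WithZero (Multiplicative ℤ)) := by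
    by_cases hcase : v.valuation L (g.eval u₀) =
        ((Multiplicative.ofAdd (-1 : ℤ) : Multiplicative ℤ) : WithZero (Multiplicative ℤ))
    · exact ⟨u₀, hu₀, hcase⟩
    · refine ⟨u₀ + tL, ?_, ?_⟩
      · exact le_trans ((v.valuation L).map_add _ _) (max_le hu₀ hπle)
      · have hlt : v.valuation L (g.eval u₀) <
            ((Multiplicative.ofAdd (-1 : ℤ) : Multiplicative ℤ) :
              WithZero (Multiplicative ℤ)) :=
          Stmt3Aux.lt_ofAdd_neg_one hgu₀ hcase
        rw [hQev]
        have h1 : v.valuation L ((derivative g).eval u₀ * tL) =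
            ((Multiplicative.ofAdd (-1 : ℤ) : Multiplicative ℤ) :
              WithZero (Multiplicative ℤ)) := by
          rw [map_mul, hder, one_mul, hπv]
        have h2 : v.valuation L (tL ^ 2 * Q.eval tL) <
            ((Multiplicative.ofAdd (-1 : ℤ) : Multiplicative ℤ) :
              WithZero (Multiplicative ℤ)) := by
          rw [map_mul, map_pow, hπv]
          have hle2 : ((Multiplicative.ofAdd (-1 : ℤ) : Multiplicative ℤ) :
              WithZero (Multiplicative ℤ)) ^ 2 * v.valuation L (Q.eval tL) ≤
              ((Multiplicative.ofAdd (-2 : ℤ) : Multiplicative ℤ) :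
                WithZero (Multiplicative ℤ)) := by
            calc ((Multiplicative.ofAdd (-1 : ℤ) : Multiplicative ℤ) :
                WithZero (Multiplicative ℤ)) ^ 2 * v.valuation L (Q.eval tL) ≤
                ((Multiplicative.ofAdd (-1 : ℤ) : Multiplicative ℤ) :
                  WithZero (Multiplicative ℤ)) ^ 2 * 1 := mul_le_mul_right hQevle _
            _ = ((Multiplicative.ofAdd (-2 : ℤ) : Multiplicative ℤ) :
                WithZero (Multiplicative ℤ)) := by
              rw [mul_one, ← WithZero.coe_pow, ← ofAdd_nsmul]
              norm_num
          refine lt_of_le_of_lt hle2 ?_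
          rw [WithZero.coe_lt_coe]
          exact Multiplicative.ofAdd_lt.2 (by norm_num)
        have h12 : v.valuation L (g.eval u₀ + (derivative g).eval u₀ * tL) =
            ((Multiplicative.ofAdd (-1 : ℤ) : Multiplicative ℤ) :
              WithZero (Multiplicative ℤ)) := by
          rw [Valuation.map_add_eq_of_lt_right _ (by rw [h1]; exact hlt)]
          exact h1
        rw [Valuation.map_add_eq_of_lt_left _ (by rw [h12]; exact h2)]
        exact h12
  obtain ⟨u, hu, hval⟩ := hmain
  -- h has valuation 1 at u
  have hhu : v.valuation L (h.eval u) = 1 := by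
    have h1 : (A₂.eval u) * (g.eval u) + (B₂.eval u) * (h.eval u) = 1 := by
      have := congrArg (Polynomial.eval u) hbz2
      simpa [eval_add, eval_mul] using this
    refine Stmt3Aux.val_eq_one_of_sum v h1
      (Stmt3Aux.val_eval_le_one v A₂ hvA₂ hu) ?_
      (Stmt3Aux.val_eval_le_one v B₂ hvB₂ hu)
      (Stmt3Aux.val_eval_le_one v h hvh hu)
    rw [hval]
    exact Stmt3Aux.ofAdd_neg_one_lt_one
  have hgu0 : g.eval u ≠ 0 := by
    intro h0
    rw [h0, map_zero] at hval
    exact WithZero.zero_ne_coe hval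
  have hhu0 : h.eval u ≠ 0 := by
    intro h0
    rw [h0, map_zero] at hhu
    exact zero_ne_one hhu
  have hfu : f.eval u = (g.eval u) ^ m * h.eval u := by
    rw [hfeq]
    simp [eval_mul, eval_pow]
  have hfu0 : f.eval u ≠ 0 := by
    rw [hfu]
    exact mul_ne_zero (pow_ne_zero _ hgu0) hhu0
  -- class membership and representative
  set fuU : Lˣ := Units.mk0 (f.eval u) hfu0 with hfuU
  set q₀ : Lˣ ⧸ (powMonoidHom k : Lˣ →* Lˣ).range := QuotientGroup.mk fuU with hq₀
  have hq₀mem : q₀ ∈ hinf.toFinset := hinf.mem_toFinset.2 ⟨u, hfu0, rfl⟩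
  have hva : v.valuation L ((q₀.out : Lˣ) : L) = 1 := by
    by_contra hne
    exact hvrep q₀ ⟨hq₀mem, hne⟩
  have hmka : (QuotientGroup.mk q₀.out : Lˣ ⧸ (powMonoidHom k : Lˣ →* Lˣ).range) =
      QuotientGroup.mk fuU := QuotientGroup.out_eq' q₀
  obtain ⟨y, hy⟩ := QuotientGroup.eq.1 hmka.symm
  -- hy : powMonoidHom k y = fuU⁻¹ * q₀.out ... need to check direction
  have hyk : (fuU : L) = ((q₀.out : Lˣ) : L) * ((y : L))⁻¹ ^ k := by
    have h1 : (powMonoidHom k : Lˣ →* Lˣ) y = fuU⁻¹ * q₀.out := hy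
    have h2 : y ^ k = fuU⁻¹ * q₀.out := by rwa [powMonoidHom_apply] at h1
    have h3 : fuU = q₀.out * (y ^ k)⁻¹ := by
      rw [h2]
      group
    have := congrArg (Units.val) h3
    simpa [Units.val_mul, Units.val_pow_eq_pow_val] using this
  have hfval : f.eval u = ((q₀.out : Lˣ) : L) * (((y : L))⁻¹) ^ k := by
    have : (fuU : L) = f.eval u := rfl
    rw [← this, hyk]
  -- valuation computation
  have hvf : v.valuation L (f.eval u) =
      ((Multiplicative.ofAdd (-(m : ℤ)) : Multiplicative ℤ) : WithZero (Multiplicative ℤ)) := by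
    rw [hfu, map_mul, map_pow, hval, hhu, mul_one, ← WithZero.coe_pow]
    congr 1
    rw [← ofAdd_nsmul]
    congr 1
    push_cast
    ring
  have hyinv0 : ((y : L))⁻¹ ≠ 0 := inv_ne_zero (Units.ne_zero y)
  have hvy0 : v.valuation L (((y : L))⁻¹) ≠ 0 := (Valuation.ne_zero_iff _).2 hyinv0
  set γ := WithZero.unzero hvy0 with hγ
  have hγeq : (γ : WithZero (Multiplicative ℤ)) = v.valuation L (((y : L))⁻¹) :=
    WithZero.coe_unzero hvy0
  have hcoeeq : ((Multiplicative.ofAdd (-(m : ℤ)) : Multiplicative ℤ) :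
      WithZero (Multiplicative ℤ)) = ((γ ^ k : Multiplicative ℤ) :
      WithZero (Multiplicative ℤ)) := by
    rw [WithZero.coe_pow, hγeq, ← hvf, hfval, map_mul, hva, one_mul, map_pow]
  have heq2 : Multiplicative.ofAdd (-(m : ℤ)) = γ ^ k := WithZero.coe_inj.1 hcoeeq
  have heq3 : -(m : ℤ) = k • Multiplicative.toAdd γ := by
    have := congrArg Multiplicative.toAdd heq2
    rwa [toAdd_ofAdd, toAdd_pow] at this
  apply hkm
  have hdvd : (k : ℤ) ∣ (m : ℤ) := by
    refine ⟨-(Multiplicative.toAdd γ), ?_⟩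
    rw [nsmul_eq_mul] at heq3
    linarith
  exact_mod_cast hdvd
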